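/- Let (R,m,k) be a commutative Noetherian local ring and let M and N be finitely generated R-modules with N faithful (i.e., the annihilator of N in R is zero). If t ≥ 1 is an integer such that Ext^t_R(M, mN) = 0, then the projective dimension of M is strictly less than t. -/

import Mathlib

open CategoryTheory

universe u

/-- The colon submodule `(N :_X I) = {x ∈ X : I • x ⊆ N}`. -/
def Submodule.colonBy {R X : Type u} [CommRing R] [AddCommGroup X] [Module R X]
    (N : Submodule R X) (I : Ideal R) : Submodule R X where
  carrier := {x | ∀ r ∈ I, r • x ∈ N}
  add_mem' := by
    intro a b ha hb r hr
    rw [smul_add]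
    exact N.add_mem (ha r hr) (hb r hr)
  zero_mem' := by
    intro r hr
    rw [smul_zero]
    exact N.zero_mem
  smul_mem' := by
    intro c x hx r hr
    rw [smul_comm]
    exact N.smul_mem c (hx r hr)

/-- A submodule `N` of a module `X` over a local ring `(R, 𝔪)` is *Burch* if
`𝔪 • (N :_X 𝔪) ≠ 𝔪 • N`. -/
def Submodule.IsBurch {R X : Type u} [CommRing R] [IsLocalRing R] [AddCommGroup X]
    [Module R X] (N : Submodule R X) : Prop :=
  IsLocalRing.maximalIdeal R • N.colonBy (IsLocalRing.maximalIdeal R) ≠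
    IsLocalRing.maximalIdeal R • N

/-- `Tor_n^R(M, N) = 0`. -/
def TorIsZero (R : Type u) [CommRing R] (M N : Type u) [AddCommGroup M] [Module R M]
    [AddCommGroup N] [Module R N] (n : ℕ) : Prop :=
  Subsingleton (((Tor (ModuleCat.{u} R) n).obj (ModuleCat.of R M)).obj (ModuleCat.of R N))

/-- `Ext^n_R(M, N) = 0`. -/
def ExtIsZero (R : Type u) [CommRing R] (M N : Type u) [AddCommGroup M] [Module R M]
    [AddCommGroup N] [Module R N] (n : ℕ) : Prop :=
  Subsingleton
    (((Ext R (ModuleCat.{u} R) n).obj (Opposite.op (ModuleCat.of R M))).obj (ModuleCat.of R N))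

/-- `M` has projective dimension strictly less than `t`, i.e. `M` admits a projective
resolution vanishing in all degrees `≥ t`. -/
def HasProjDimLT (R : Type u) [CommRing R] (M : Type u) [AddCommGroup M] [Module R M]
    (t : ℕ) : Prop :=
  ∃ P : ProjectiveResolution (ModuleCat.of R M), ∀ i, t ≤ i → Limits.IsZero (P.complex.X i)

/-- `M` has injective dimension strictly less than `t`, i.e. `M` admits an injective
resolution vanishing in all degrees `≥ t`. -/
def HasInjDimLT (R : Type u) [CommRing R] (M : Type u) [AddCommGroup M] [Module R M]
    (t : ℕ) : Prop :=
  ∃ I : InjectiveResolution (ModuleCat.of R M), ∀ i, t ≤ i → Limits.IsZero (I.cocomplex.X i)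

/-- The depth of a module `M` over a local ring `(R, 𝔪, k)`: the smallest `i` such that
`Ext^i_R(k, M) ≠ 0` (and `⊤` if no such `i` exists). -/
noncomputable def moduleDepth (R : Type u) [CommRing R] [IsLocalRing R] (M : Type u)
    [AddCommGroup M] [Module R M] : ℕ∞ :=
  sInf {n : ℕ∞ | ∃ i : ℕ, n = (i : ℕ∞) ∧ ¬ ExtIsZero R (IsLocalRing.ResidueField R) M i}

section BurchAuxSection

set_option linter.unusedSectionVars false

namespace BurchAux

open Submodule Set

variable (R : Type u) [CommRing R]

/-- Minimal number of generators. -/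
noncomputable def ngen (X : Type u) [AddCommGroup X] [Module R X] : ℕ :=
  sInf {n | ∃ f : Fin n → X, Submodule.span R (Set.range f) = ⊤}

variable (X : Type u) [AddCommGroup X] [Module R X]

lemma ngen_mem [Module.Finite R X] :
    ngen R X ∈ {n | ∃ f : Fin n → X, Submodule.span R (Set.range f) = ⊤} := by
  apply Nat.sInf_mem
  obtain ⟨n, f, hf⟩ := Module.Finite.exists_fin (R := R) (M := X)
  exact ⟨n, f, hf⟩

/-- A minimal generating family. -/
noncomputable def mingen [Module.Finite R X] : Fin (ngen R X) → X :=
  (ngen_mem R X).choose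

lemma span_mingen [Module.Finite R X] : Submodule.span R (Set.range (mingen R X)) = ⊤ :=
  (ngen_mem R X).choose_spec

lemma ngen_le [Module.Finite R X] {n : ℕ} (f : Fin n → X)
    (hf : Submodule.span R (Set.range f) = ⊤) : ngen R X ≤ n :=
  Nat.sInf_le ⟨f, hf⟩

lemma ngen_eq_zero_of_subsingleton [Module.Finite R X] [Subsingleton X] : ngen R X = 0 := by
  refine Nat.le_zero.mp (ngen_le R X (fun i => i.elim0) ?_)
  refine Subsingleton.elim _ _

/-- The minimal cover map `R^n → X`. -/
noncomputable def cover [Module.Finite R X] : (Fin (ngen R X) → R) →ₗ[R] X :=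
  Fintype.linearCombination R (mingen R X)

lemma cover_surjective [Module.Finite R X] : Function.Surjective (cover R X) := by
  rw [← LinearMap.range_eq_top, cover, Fintype.range_linearCombination, span_mingen]

end BurchAux

namespace BurchAux

variable {R : Type u} [CommRing R]

lemma mem_smul_top_pi_iff {n : ℕ} (I : Ideal R) (x : Fin n → R) :
    x ∈ I • (⊤ : Submodule R (Fin n → R)) ↔ ∀ i, x i ∈ I := by
  constructor
  · intro hx
    refine Submodule.smul_induction_on hx ?_ ?_
    · intro r hr m _ i
      exact I.mul_mem_right _ hr
    · intro a b ha hb i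
      exact I.add_mem (ha i) (hb i)
  · intro hx
    have hx' : x = ∑ i, Pi.single i (x i) := (Finset.univ_sum_single x).symm
    rw [hx']
    refine Submodule.sum_mem _ fun i _ => ?_
    have : Pi.single i (x i) = (x i) • (Pi.single i (1 : R) : Fin n → R) := by
      rw [← Pi.single_smul, smul_eq_mul, mul_one]
    rw [this]
    exact Submodule.smul_mem_smul (hx i) trivial

end BurchAux

namespace BurchAux

open Submodule

variable {R : Type u} [CommRing R] [IsLocalRing R]
variable {X : Type u} [AddCommGroup X] [Module R X]

lemma span_drop {n : ℕ} (f : Fin (n + 1) → X) (i : Fin (n + 1)) (z : Fin (n + 1) → R)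
    (hz : ∑ j, z j • f j = 0) (hu : IsUnit (z i))
    (hf : Submodule.span R (Set.range f) = ⊤) :
    Submodule.span R (Set.range (f ∘ i.succAbove)) = ⊤ := by
  refine top_unique ?_
  rw [← hf]
  refine Submodule.span_le.mpr ?_
  rintro _ ⟨j, rfl⟩
  by_cases hj : j = i
  · subst hj
    obtain ⟨v, hv⟩ := hu
    have hsum := Fin.sum_univ_succAbove (fun k => z k • f k) j
    rw [hz] at hsum
    have hji : z j • f j = -∑ k : Fin n, z (j.succAbove k) • f (j.succAbove k) := by
      rw [eq_neg_iff_add_eq_zero]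
      exact hsum.symm
    have hfj : f j = (v⁻¹ : Rˣ) • (z j • f j) := by
      rw [Units.smul_def, smul_smul, ← hv, Units.inv_mul, one_smul]
    rw [hfj, hji]
    refine Submodule.smul_mem _ _ (Submodule.neg_mem _ (Submodule.sum_mem _ fun k _ => ?_))
    exact Submodule.smul_mem _ _ (Submodule.subset_span ⟨k, rfl⟩)
  · obtain ⟨k, rfl⟩ := Fin.exists_succAbove_eq hj
    exact Submodule.subset_span ⟨k, rfl⟩

lemma ker_cover_le [Module.Finite R X] :
    LinearMap.ker (cover R X) ≤ (IsLocalRing.maximalIdeal R) • ⊤ := by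
  intro z hz
  by_contra hzm
  rw [mem_smul_top_pi_iff] at hzm
  push_neg at hzm
  obtain ⟨i, hi⟩ := hzm
  have hu : IsUnit (z i) := by
    by_contra hnu
    exact hi ((IsLocalRing.mem_maximalIdeal _).mpr (mem_nonunits_iff.mpr hnu))
  have hz0 : ∑ j, z j • mingen R X j = 0 := by
    have := LinearMap.mem_ker.mp hz
    rwa [cover, Fintype.linearCombination_apply] at this
  -- reduce to the successor case
  rcases n_eq : ngen R X with _ | n
  · rw [n_eq] at i; exact i.elim0
  · have hspan' : Submodule.span R (Set.range (mingen R X ∘ Fin.cast n_eq.symm)) = ⊤ := by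
      rw [Set.range_comp]
      have : Set.range (Fin.cast n_eq.symm) = Set.univ :=
        (finCongr n_eq.symm).surjective.range_eq
      rw [this, Set.image_univ]
      exact span_mingen R X
    have hz0' : ∑ j : Fin (n + 1), (z ∘ Fin.cast n_eq.symm) j •
        (mingen R X ∘ Fin.cast n_eq.symm) j = 0 := by
      rw [Fintype.sum_equiv (finCongr n_eq.symm)
        (fun j => (z ∘ Fin.cast n_eq.symm) j • (mingen R X ∘ Fin.cast n_eq.symm) j)
        (fun k => z k • mingen R X k) (fun j => rfl)]
      exact hz0
    have hu' : IsUnit ((z ∘ Fin.cast n_eq.symm) (Fin.cast n_eq i)) := hu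
    have hlt : ngen R X ≤ n :=
      ngen_le R X ((mingen R X ∘ Fin.cast n_eq.symm) ∘ (Fin.cast n_eq i).succAbove)
        (span_drop _ _ _ hz0' hu' hspan')
    omega

end BurchAux

namespace BurchAux

open Submodule IsLocalRing

variable {R : Type u} [CommRing R] [IsLocalRing R]
variable {N : Type u} [AddCommGroup N] [Module R N] [Module.Finite R N]

/-- The submodule of linear maps vanishing on `K`. -/
def vanishOn {F : Type u} [AddCommGroup F] [Module R F] (K : Submodule R F) :
    Submodule R (F →ₗ[R] N) where
  carrier := {θ | ∀ z ∈ K, θ z = 0}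
  add_mem' := by
    intro a b ha hb z hz
    simp [ha z hz, hb z hz]
  zero_mem' := by intro z hz; simp
  smul_mem' := by
    intro c θ hθ z hz
    simp [hθ z hz]

lemma smulRight_mem_smul_top {n : ℕ} (i : Fin n) {y : N}
    (hy : y ∈ maximalIdeal R • (⊤ : Submodule R N)) :
    (LinearMap.proj i : (Fin n → R) →ₗ[R] R).smulRight y ∈
      maximalIdeal R • (⊤ : Submodule R ((Fin n → R) →ₗ[R] N)) := by
  let L : N →ₗ[R] ((Fin n → R) →ₗ[R] N) :=
    LinearMap.smulRightₗ (LinearMap.proj i : (Fin n → R) →ₗ[R] R)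
  have hmem : L y ∈ Submodule.map L (maximalIdeal R • (⊤ : Submodule R N)) := ⟨y, hy, rfl⟩
  rw [Submodule.map_smul''] at hmem
  have hle : maximalIdeal R • Submodule.map L ⊤ ≤ maximalIdeal R • ⊤ := smul_mono_right _ le_top
  exact hle hmem

lemma mem_smul_top_of_range_le {n : ℕ} (ψ : (Fin n → R) →ₗ[R] N)
    (hψ : ∀ x, ψ x ∈ maximalIdeal R • (⊤ : Submodule R N)) :
    ψ ∈ maximalIdeal R • (⊤ : Submodule R ((Fin n → R) →ₗ[R] N)) := by
  have hdec : ψ = ∑ i, (LinearMap.proj i : (Fin n → R) →ₗ[R] R).smulRight (ψ (Pi.single i 1)) := by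
    refine LinearMap.ext fun x => ?_
    rw [LinearMap.sum_apply]
    simp only [LinearMap.smulRight_apply, LinearMap.proj_apply]
    have : x = ∑ i, x i • (Pi.single i (1 : R) : Fin n → R) := by
      rw [show (fun i => x i • (Pi.single i (1:R) : Fin n → R)) = fun i => Pi.single i (x i) by
        funext i; rw [← Pi.single_smul, smul_eq_mul, mul_one]]
      exact (Finset.univ_sum_single x).symm
    conv_lhs => rw [this]
    rw [map_sum]
    refine Finset.sum_congr rfl fun i _ => ?_
    rw [map_smul]
  rw [hdec]
  exact Submodule.sum_mem _ fun i _ => smulRight_mem_smul_top i (hψ _)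

lemma key_vanish {n : ℕ} (hfaith : Module.annihilator R N = ⊥)
    [IsNoetherianRing R]
    (K : Submodule R (Fin n → R)) (hK : K ≤ maximalIdeal R • ⊤)
    (hext : ∀ φ : ↥K →ₗ[R] ↥(maximalIdeal R • (⊤ : Submodule R N)),
      ∃ ψ : (Fin n → R) →ₗ[R] ↥(maximalIdeal R • (⊤ : Submodule R N)),
        ∀ z : ↥K, ψ ↑z = φ z) :
    K = ⊥ := by
  set mN : Submodule R N := maximalIdeal R • ⊤ with hmN
  set Z : Submodule R ((Fin n → R) →ₗ[R] N) := vanishOn K with hZ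
  -- every θ : F →ₗ N maps K into mN
  have hres : ∀ (θ : (Fin n → R) →ₗ[R] N), ∀ x ∈ K, θ x ∈ mN := by
    intro θ x hx
    have : θ x ∈ Submodule.map θ (maximalIdeal R • (⊤ : Submodule R (Fin n → R))) :=
      ⟨x, hK hx, rfl⟩
    rw [Submodule.map_smul''] at this
    have hle : maximalIdeal R • Submodule.map θ ⊤ ≤ maximalIdeal R • ⊤ :=
      smul_mono_right _ le_top
    exact hle this
  -- ⊤ ≤ Z ⊔ 𝔪 • ⊤
  have hsup : (⊤ : Submodule R ((Fin n → R) →ₗ[R] N)) ≤ Z ⊔ maximalIdeal R • ⊤ := by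
    intro θ _
    obtain ⟨ψ', hψ'⟩ := hext (θ.restrict (hres θ))
    have hg : (mN.subtype ∘ₗ ψ') ∈
        maximalIdeal R • (⊤ : Submodule R ((Fin n → R) →ₗ[R] N)) :=
      mem_smul_top_of_range_le _ (fun x => (ψ' x).2)
    have hZmem : θ - mN.subtype ∘ₗ ψ' ∈ Z := by
      intro z hz
      show θ z - (mN.subtype ∘ₗ ψ') z = 0
      have h1 : (mN.subtype ∘ₗ ψ') z = ((θ.restrict (hres θ)) ⟨z, hz⟩ : N) := by
        show ((ψ' z : N)) = _
        rw [hψ' ⟨z, hz⟩]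
      rw [h1, LinearMap.restrict_apply]
      exact sub_self _
    have hθ : θ = (θ - mN.subtype ∘ₗ ψ') + mN.subtype ∘ₗ ψ' := (sub_add_cancel _ _).symm
    rw [hθ]
    exact Submodule.add_mem_sup hZmem hg
  -- Nakayama: Z = ⊤
  have hZtop : Z = ⊤ := by
    have hmap : Submodule.map Z.mkQ (Z ⊔ maximalIdeal R • ⊤) ≤ maximalIdeal R • ⊤ := by
      rw [Submodule.map_sup]
      apply sup_le
      · have hbot : Submodule.map Z.mkQ Z = ⊥ := by
          rw [eq_bot_iff]
          rintro x ⟨θ, hθ, rfl⟩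
          rw [Submodule.mem_bot]
          exact (Submodule.Quotient.mk_eq_zero Z).mpr hθ
        rw [hbot]
        exact bot_le
      · rw [Submodule.map_smul'']
        exact smul_mono_right _ le_top
    have h1 : (⊤ : Submodule R (((Fin n → R) →ₗ[R] N) ⧸ Z)) ≤ maximalIdeal R • ⊤ := by
      intro q _
      obtain ⟨θ, rfl⟩ := Submodule.mkQ_surjective Z q
      exact hmap ⟨θ, hsup trivial, rfl⟩
    have h2 : (⊤ : Submodule R (((Fin n → R) →ₗ[R] N) ⧸ Z)) = ⊥ :=
      Submodule.eq_bot_of_le_smul_of_le_jacobson_bot (maximalIdeal R) ⊤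
        (IsNoetherian.noetherian _) h1
        (le_of_eq (IsLocalRing.jacobson_eq_maximalIdeal ⊥ bot_ne_top).symm)
    rw [eq_top_iff]
    intro θ _
    have hq : Z.mkQ θ ∈ (⊥ : Submodule R (((Fin n → R) →ₗ[R] N) ⧸ Z)) :=
      h2 ▸ Submodule.mem_top
    rw [Submodule.mem_bot] at hq
    exact (Submodule.Quotient.mk_eq_zero Z).mp hq
  -- conclude K = 0 from faithfulness
  rw [eq_bot_iff]
  intro z hz
  rw [Submodule.mem_bot]
  funext i
  have hann : z i ∈ Module.annihilator R N := by
    rw [Module.mem_annihilator]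
    intro y
    have hθ : ((LinearMap.proj i : (Fin n → R) →ₗ[R] R).smulRight y) ∈ Z :=
      hZtop ▸ Submodule.mem_top
    have := hθ z hz
    simpa using this
  rw [hfaith, Submodule.mem_bot] at hann
  exact hann

end BurchAux

namespace BurchAux

open Submodule

variable (R : Type u) [CommRing R] [IsLocalRing R] [IsNoetherianRing R]
variable (M : Type u) [AddCommGroup M] [Module R M] [Module.Finite R M]

/-- The sequence of syzygy data: `(seq i).1` is the rank of the `i`-th free module in the
minimal free resolution, and `(seq i).2` is the `i`-th syzygy submodule. -/
noncomputable def seq : (i : ℕ) → Σ n : ℕ, Submodule R (Fin n → R)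
  | 0 => ⟨ngen R M, LinearMap.ker (cover R M)⟩
  | i + 1 => ⟨ngen R ↥(seq i).2, LinearMap.ker (cover R ↥(seq i).2)⟩

/-- The differentials of the minimal free resolution. -/
noncomputable def resd (i : ℕ) :
    (Fin (seq R M (i + 1)).1 → R) →ₗ[R] (Fin (seq R M i).1 → R) :=
  ((seq R M i).2.subtype).comp (cover R ↥(seq R M i).2)

lemma resd_ker (i : ℕ) : LinearMap.ker (resd R M i) = (seq R M (i + 1)).2 := by
  ext x
  simp only [resd, LinearMap.mem_ker, LinearMap.comp_apply, Submodule.subtype_apply,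
    ZeroMemClass.coe_eq_zero]
  exact Submodule.coe_eq_zero

lemma resd_range (i : ℕ) : LinearMap.range (resd R M i) = (seq R M i).2 := by
  ext x
  constructor
  · rintro ⟨y, rfl⟩
    exact (cover R _ y).2
  · intro hx
    obtain ⟨y, hy⟩ := cover_surjective R ↥(seq R M i).2 ⟨x, hx⟩
    exact ⟨y, congrArg Subtype.val hy⟩

lemma resd_comp (i : ℕ) : (resd R M i).comp (resd R M (i + 1)) = 0 := by
  refine LinearMap.ext fun x => ?_
  have hx : resd R M (i + 1) x ∈ LinearMap.ker (resd R M i) := by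
    rw [resd_ker]
    rw [← resd_range R M (i + 1)]
    exact ⟨x, rfl⟩
  simpa using hx

lemma seq_le_smul_top (i : ℕ) :
    (seq R M i).2 ≤ IsLocalRing.maximalIdeal R • ⊤ := by
  cases i with
  | zero => exact ker_cover_le
  | succ i => exact ker_cover_le

end BurchAux

namespace BurchAux

open CategoryTheory Limits

variable (R : Type u) [CommRing R] [IsLocalRing R] [IsNoetherianRing R]
variable (M : Type u) [AddCommGroup M] [Module R M] [Module.Finite R M]

/-- The minimal free resolution as a chain complex of `R`-modules. -/
noncomputable def rescomplex : ChainComplex (ModuleCat.{u} R) ℕ :=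
  ChainComplex.of (fun i => ModuleCat.of R (Fin (seq R M i).1 → R))
    (fun i => ModuleCat.ofHom (resd R M i))
    (fun i => by
      have := resd_comp R M i
      exact ModuleCat.hom_ext this)

lemma rescomplex_X (i : ℕ) :
    (rescomplex R M).X i = ModuleCat.of R (Fin (seq R M i).1 → R) := rfl

lemma rescomplex_d (i : ℕ) :
    (rescomplex R M).d (i + 1) i = ModuleCat.ofHom (resd R M i) := by
  simp [rescomplex]

instance rescomplex_projective (i : ℕ) : Projective ((rescomplex R M).X i) :=
  ModuleCat.projective_of_free (Pi.basisFun R (Fin (seq R M i).1))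

/-- The augmentation map. -/
noncomputable def resaug : (rescomplex R M).X 0 ⟶ ModuleCat.of R M :=
  ModuleCat.ofHom (cover R M)

lemma resd_comp_resaug : (rescomplex R M).d 1 0 ≫ resaug R M = 0 := by
  rw [rescomplex_d]
  refine ModuleCat.hom_ext (LinearMap.ext fun x => ?_)
  have hx : resd R M 0 x ∈ LinearMap.ker (cover R M) := by
    have : resd R M 0 x ∈ (seq R M 0).2 := by
      rw [← resd_range R M 0]; exact ⟨x, rfl⟩
    exact this
  exact hx

end BurchAux

namespace BurchAux

open CategoryTheory Limits

variable (R : Type u) [CommRing R] [IsLocalRing R] [IsNoetherianRing R]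
variable (M : Type u) [AddCommGroup M] [Module R M] [Module.Finite R M]

lemma rescomplex_exactAt_succ (n : ℕ) : (rescomplex R M).ExactAt (n + 1) := by
  rw [HomologicalComplex.exactAt_iff' _ (n + 2) (n + 1) n (by simp) (by simp)]
  dsimp [HomologicalComplex.sc', HomologicalComplex.shortComplexFunctor']
  rw [ShortComplex.moduleCat_exact_iff]
  simp only [rescomplex_d]
  intro x₂ hx₂
  have hmem : x₂ ∈ (seq R M (n + 1)).2 := by
    rw [← resd_ker R M n]
    exact hx₂
  rw [← resd_range R M (n + 1)] at hmem
  obtain ⟨x₁, hx₁⟩ := hmem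
  exact ⟨x₁, hx₁⟩

/-- The minimal free resolution of `M`. -/
noncomputable def resolution : ProjectiveResolution (ModuleCat.of R M) where
  complex := rescomplex R M
  π := (ChainComplex.toSingle₀Equiv _ _).symm ⟨resaug R M, resd_comp_resaug R M⟩
  quasiIso := ⟨fun n => by
    cases n with
    | zero =>
      rw [ChainComplex.quasiIsoAt₀_iff, ShortComplex.quasiIso_iff_of_zeros']
      · constructor
        · rw [ShortComplex.moduleCat_exact_iff]
          intro x₂ hx₂
          have hx₂' : x₂ ∈ LinearMap.ker (cover R M) := by
            have : (resaug R M) x₂ = 0 := by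
              exact hx₂
            exact this
          have hmem : x₂ ∈ (seq R M 0).2 := hx₂'
          rw [← resd_range R M 0] at hmem
          obtain ⟨x₁, hx₁⟩ := hmem
          refine ⟨x₁, ?_⟩
          show ((rescomplex R M).d 1 0) x₁ = x₂
          rw [rescomplex_d]
          exact hx₁
        · have : Epi (resaug R M) := by
            rw [ModuleCat.epi_iff_surjective]
            exact cover_surjective R M
          exact this
      all_goals rfl
    | succ n =>
      rw [quasiIsoAt_iff_exactAt']
      · exact rescomplex_exactAt_succ R M n
      · apply ChainComplex.exactAt_succ_single_obj⟩

end BurchAux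

namespace BurchAux

open CategoryTheory Limits

variable (R : Type u) [CommRing R] [IsLocalRing R] [IsNoetherianRing R]
variable (M : Type u) [AddCommGroup M] [Module R M] [Module.Finite R M]

lemma subsingleton_pi_of_rank_zero {n : ℕ} (h : n = 0) : Subsingleton (Fin n → R) := by
  subst h
  exact ⟨fun a b => funext fun j => j.elim0⟩

lemma seq_eq_bot {N : Type u} [AddCommGroup N] [Module R N] [Module.Finite R N]
    (hfaith : Module.annihilator R N = ⊥) (s : ℕ)
    (h : Subsingleton (((Ext R (ModuleCat.{u} R) (s + 1)).obj
        (Opposite.op (ModuleCat.of R M))).obj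
        (ModuleCat.of R ↥(IsLocalRing.maximalIdeal R • (⊤ : Submodule R N))))) :
    (seq R M s).2 = ⊥ := by
  set B : ModuleCat.{u} R :=
    ModuleCat.of R ↥(IsLocalRing.maximalIdeal R • (⊤ : Submodule R N)) with hB
  set P := resolution R M with hP
  haveI := h
  have hzero : IsZero (((Ext R (ModuleCat.{u} R) (s + 1)).obj
      (Opposite.op (ModuleCat.of R M))).obj B) :=
    ModuleCat.isZero_of_subsingleton _
  have hz : IsZero ((P.complex.linearYonedaObj R B).homology (s + 1)) :=
    IsZero.of_iso hzero (P.isoExt (s + 1) B).symm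
  have hex : (P.complex.linearYonedaObj R B).ExactAt (s + 1) :=
    (HomologicalComplex.exactAt_iff_isZero_homology _ _).2 hz
  rw [HomologicalComplex.exactAt_iff' _ s (s + 1) (s + 2) (by simp) (by simp),
    ShortComplex.moduleCat_exact_iff] at hex
  apply key_vanish hfaith _ (seq_le_smul_top R M s)
  intro φ'
  -- the induced cocycle
  set φ : ((rescomplex R M).X (s + 1) ⟶ B) :=
    ModuleCat.ofHom (φ'.comp (cover R ↥(seq R M s).2)) with hφ
  have hcond : ((P.complex.linearYonedaObj R B).sc' s (s + 1) (s + 2)).g φ = 0 := by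
    show (rescomplex R M).d (s + 2) (s + 1) ≫ φ = 0
    rw [rescomplex_d]
    refine ModuleCat.hom_ext (LinearMap.ext fun x => ?_)
    show φ' (cover R ↥(seq R M s).2 (resd R M (s + 1) x)) = 0
    have hmem : resd R M (s + 1) x = ((cover R ↥(seq R M (s + 1)).2 x : ↥(seq R M (s + 1)).2) :
        Fin (seq R M (s + 1)).1 → R) := rfl
    rw [hmem]
    have hker : ((cover R ↥(seq R M (s + 1)).2 x : ↥(seq R M (s + 1)).2) :
        Fin (seq R M (s + 1)).1 → R) ∈ LinearMap.ker (cover R ↥(seq R M s).2) :=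
      (cover R ↥(seq R M (s + 1)).2 x).2
    have hker' : cover R ↥(seq R M s).2 _ = 0 := hker
    have := congrArg φ' hker'
    exact this.trans (map_zero φ')
  obtain ⟨ψ₀, hψ⟩ := hex φ hcond
  let ψ : ((rescomplex R M).X s ⟶ B) := ψ₀
  refine ⟨ψ.hom, fun z => ?_⟩
  obtain ⟨w, hw⟩ := cover_surjective R ↥(seq R M s).2 z
  have h1 : (rescomplex R M).d (s + 1) s ≫ ψ = φ := hψ
  rw [rescomplex_d] at h1
  have h2 : ψ.hom (resd R M s w) = φ' (cover R ↥(seq R M s).2 w) :=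
    congrArg (fun f => f.hom w) h1
  have h3 : resd R M s w = ((z : ↥(seq R M s).2) : Fin (seq R M s).1 → R) := by
    show ((cover R ↥(seq R M s).2 w : ↥(seq R M s).2) : Fin (seq R M s).1 → R) = _
    rw [hw]
  rw [h3, hw] at h2
  exact h2

lemma isZero_of_seq_bot (s : ℕ) (hbot : (seq R M s).2 = ⊥) :
    ∀ i, s + 1 ≤ i → IsZero ((rescomplex R M).X i) := by
  have hrank : ∀ j, (seq R M (s + 1 + j)).1 = 0 := by
    intro j
    induction j with
    | zero =>
      haveI : Subsingleton ↥(seq R M s).2 :=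
        ⟨fun a b => Subtype.ext (by
          have h0 := (Submodule.eq_bot_iff _).mp hbot
          rw [h0 ↑a a.2, h0 ↑b b.2])⟩
      exact ngen_eq_zero_of_subsingleton R ↥(seq R M s).2
    | succ j ih =>
      haveI hsub : Subsingleton (Fin (seq R M (s + 1 + j)).1 → R) :=
        subsingleton_pi_of_rank_zero R ih
      haveI : Subsingleton ↥(seq R M (s + 1 + j)).2 :=
        ⟨fun a b => Subtype.ext (Subsingleton.elim _ _)⟩
      exact ngen_eq_zero_of_subsingleton R ↥(seq R M (s + 1 + j)).2
  intro i hi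
  obtain ⟨j, rfl⟩ : ∃ j, i = s + 1 + j := ⟨i - (s + 1), by omega⟩
  exact @ModuleCat.isZero_of_subsingleton R _
    (ModuleCat.of R (Fin (seq R M (s + 1 + j)).1 → R))
    (subsingleton_pi_of_rank_zero R (hrank j))

end BurchAux


end BurchAuxSection

/-- Over a Noetherian local ring `(R, 𝔪)`, if `M`, `N` are finitely generated,
`N` is faithful, `t ≥ 1` and `Ext^t_R(M, 𝔪N) = 0`, then `pd_R M < t`. -/
theorem ext_vanishing_mN_faithful
    {R : Type u} [CommRing R] [IsNoetherianRing R] [IsLocalRing R]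
    {M : Type u} [AddCommGroup M] [Module R M] [Module.Finite R M]
    {N : Type u} [AddCommGroup N] [Module R N] [Module.Finite R N]
    (hfaith : Module.annihilator R N = ⊥)
    (t : ℕ) (ht : 1 ≤ t)
    (h : ExtIsZero R M (↥(IsLocalRing.maximalIdeal R • (⊤ : Submodule R N))) t) :
    HasProjDimLT R M t := by
  obtain ⟨s, rfl⟩ : ∃ s, t = s + 1 := ⟨t - 1, by omega⟩
  have hbot := BurchAux.seq_eq_bot R M hfaith s h
  show ∃ P : ProjectiveResolution (ModuleCat.of R M),
    ∀ i, s + 1 ≤ i → Limits.IsZero (P.complex.X i)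
  exact ⟨BurchAux.resolution R M, BurchAux.isZero_of_seq_bot R M s hbot⟩
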